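/- Let y and z be distinct unit vectors in ℝ³ and λ, μ > 0. Then the orthogonal projection onto the plane {y}^⊥ of the set ∂P(y,λ) ∩ P(z,μ) is the closed disc in {y}^⊥ with center c = (2λ/‖y-z‖²)·π_y(z) and radius r = 2√(λμ)/‖y-z‖, where π_y is the orthogonal projection onto {y}^⊥. -/

import Mathlib

open RealInnerProductSpace

lemma proj_perp_eq {E : Type*} [NormedAddCommGroup E] [InnerProductSpace ℝ E]
    [CompleteSpace E] (y : E) (hy : ‖y‖ = 1) (x : E) :
    (Submodule.orthogonalProjectionOnto (ℝ ∙ y)ᗮ x : E) = x - ⟪x, y⟫ • y := by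
  have h := (ℝ ∙ y).starProjection_add_starProjection_orthogonal x
  have h2 : (ℝ ∙ y).starProjection x = ⟪x, y⟫ • y := by
    rw [Submodule.starProjection_singleton ℝ, hy, real_inner_comm]
    norm_num
  have h3 : (Submodule.orthogonalProjectionOnto (ℝ ∙ y)ᗮ x : E) = (ℝ ∙ y)ᗮ.starProjection x := rfl
  rw [h3, eq_sub_iff_add_eq, ← h2, add_comm]
  exact h

lemma scalar_fwd (lam mu s t u : ℝ) (hlam : 0 < lam) (hd : 0 < 1 - s) (h : t + lam ≤ u + mu) :
    (t+lam)^2 - t*t - 2*lam/(2-2*s)*(u - s*t) - t*(t - t*1 - 2*lam/(2-2*s)*(s - s*1))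
      - 2*lam/(2-2*s)*(u - t*s - 2*lam/(2-2*s)*(1 - s*s) - s*(t - t*1 - 2*lam/(2-2*s)*(s - s*1)))
      ≤ 2*lam*mu/(1-s) := by
  rw [← sub_nonneg]
  have hne : (2:ℝ) - 2*s ≠ 0 := by linarith
  have hne2 : (1:ℝ) - s ≠ 0 := by linarith
  have key : 2*lam*mu/(1-s) - ((t+lam)^2 - t*t - 2*lam/(2-2*s)*(u - s*t)
      - t*(t - t*1 - 2*lam/(2-2*s)*(s - s*1))
      - 2*lam/(2-2*s)*(u - t*s - 2*lam/(2-2*s)*(1 - s*s) - s*(t - t*1 - 2*lam/(2-2*s)*(s - s*1))))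
      = 2*lam*((u+mu)-(t+lam))/(1-s) := by
    field_simp
    ring
  rw [key]
  apply div_nonneg _ hd.le
  nlinarith

lemma scalar_bwd (lam mu s t v : ℝ) (hlam : 0 < lam) (hd : 0 < 1 - s)
    (h : 2*lam*t + lam^2 - 2*lam/(2-2*s)*(v - s*0)
      - 2*lam/(2-2*s)*(v - 2*lam/(2-2*s)*(1 - s*s) - s*(0 - 2*lam/(2-2*s)*(s - s*1)))
      ≤ 2*lam*mu/(1-s)) : t + lam ≤ v + t*s + mu := by
  have hne : (2:ℝ) - 2*s ≠ 0 := by linarith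
  have hne2 : (1:ℝ) - s ≠ 0 := by linarith
  have key : 2*lam*t + lam^2 - 2*lam/(2-2*s)*(v - s*0)
      - 2*lam/(2-2*s)*(v - 2*lam/(2-2*s)*(1 - s*s) - s*(0 - 2*lam/(2-2*s)*(s - s*1)))
      = 2*lam*((t+lam) - (v + t*s))/(1-s) := by
    field_simp
    ring
  rw [key, div_le_div_iff₀ hd hd] at h
  nlinarith [mul_pos hlam hd]

theorem projection_of_paraboloid_cap_is_disc
    (y z : EuclideanSpace ℝ (Fin 3)) (hy : ‖y‖ = 1) (hz : ‖z‖ = 1) (hyz : y ≠ z)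
    (lam mu : ℝ) (hlam : 0 < lam) (hmu : 0 < mu) :
    (fun x : EuclideanSpace ℝ (Fin 3) =>
        ((Submodule.orthogonalProjectionOnto (ℝ ∙ y)ᗮ x : EuclideanSpace ℝ (Fin 3)))) ''
        {x | ‖x‖ = ⟪x, y⟫ + lam ∧ ‖x‖ ≤ ⟪x, z⟫ + mu} =
      {w : EuclideanSpace ℝ (Fin 3) | w ∈ (ℝ ∙ y)ᗮ ∧
        ‖w - (2 * lam / ‖y - z‖ ^ 2) •
            ((Submodule.orthogonalProjectionOnto (ℝ ∙ y)ᗮ z : EuclideanSpace ℝ (Fin 3)))‖ ≤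
          2 * Real.sqrt (lam * mu) / ‖y - z‖} := by
  set s : ℝ := ⟪y, z⟫ with hs_def
  have hyz0 : y - z ≠ 0 := sub_ne_zero.mpr hyz
  have hn : 0 < ‖y - z‖ := norm_pos_iff.mpr hyz0
  have hyy : ⟪y, y⟫ = (1:ℝ) := by
    rw [real_inner_self_eq_norm_sq, hy]; norm_num
  have hzz : ⟪z, z⟫ = (1:ℝ) := by
    rw [real_inner_self_eq_norm_sq, hz]; norm_num
  have hzy : ⟪z, y⟫ = s := (real_inner_comm z y).symm
  have hyz2 : ‖y - z‖ ^ 2 = 2 - 2 * s := by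
    rw [norm_sub_sq_real, hy, hz, ← hs_def]; ring
  have hd : 0 < 1 - s := by nlinarith [sq_nonneg ‖y - z‖, pow_pos hn 2]
  have hr0 : (0:ℝ) ≤ 2 * Real.sqrt (lam * mu) / ‖y - z‖ := by positivity
  have hrsq : (2 * Real.sqrt (lam * mu) / ‖y - z‖) ^ 2 = 2 * lam * mu / (1 - s) := by
    rw [div_pow, mul_pow, Real.sq_sqrt (by positivity : (0:ℝ) ≤ lam * mu), hyz2,
      div_eq_div_iff (by linarith) (by linarith)]
    ring
  ext w
  simp only [Set.mem_image, Set.mem_setOf_eq]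
  rw [proj_perp_eq y hy z, hzy]
  constructor
  · rintro ⟨x, ⟨h1, h2⟩, rfl⟩
    rw [proj_perp_eq y hy x]
    refine ⟨?_, ?_⟩
    · rw [← proj_perp_eq y hy x]; exact Submodule.coe_mem _
    · set t : ℝ := ⟪x, y⟫ with ht_def
      set u : ℝ := ⟪x, z⟫ with hu_def
      have hxx : ⟪x, x⟫ = (t + lam) ^ 2 := by
        rw [real_inner_self_eq_norm_sq, h1]
      have h2' : t + lam ≤ u + mu := by rw [← h1]; exact h2
      have key : ‖x - t • y - (2 * lam / ‖y - z‖ ^ 2) • (z - s • y)‖ ^ 2 ≤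
          (2 * Real.sqrt (lam * mu) / ‖y - z‖) ^ 2 := by
        rw [hrsq, ← real_inner_self_eq_norm_sq, hyz2]
        simp only [inner_sub_left, inner_sub_right, inner_smul_left, inner_smul_right,
          RCLike.ofReal_real_eq_id, id_eq, conj_trivial]
        rw [← real_inner_comm y x, ← real_inner_comm z x, hzy]
        rw [hxx, ← ht_def, ← hu_def, hyy, hzz, ← hs_def]
        exact scalar_fwd lam mu s t u hlam hd h2'
      calc ‖x - t • y - (2 * lam / ‖y - z‖ ^ 2) • (z - s • y)‖
          = Real.sqrt (‖x - t • y - (2 * lam / ‖y - z‖ ^ 2) • (z - s • y)‖ ^ 2) :=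
            (Real.sqrt_sq (norm_nonneg _)).symm
        _ ≤ Real.sqrt ((2 * Real.sqrt (lam * mu) / ‖y - z‖) ^ 2) := Real.sqrt_le_sqrt key
        _ = 2 * Real.sqrt (lam * mu) / ‖y - z‖ := Real.sqrt_sq hr0
  · rintro ⟨hw, hball⟩
    have hwy : ⟪w, y⟫ = 0 := by
      rw [Submodule.mem_orthogonal_singleton_iff_inner_left] at hw
      exact hw
    set t : ℝ := (‖w‖ ^ 2 - lam ^ 2) / (2 * lam) with ht_def
    set x : EuclideanSpace ℝ (Fin 3) := w + t • y with hx_def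
    have hxy : ⟪x, y⟫ = t := by
      simp [hx_def, inner_add_left, inner_smul_left, hwy, hyy, hy]
    have hww : ⟪w, w⟫ = 2 * lam * t + lam ^ 2 := by
      rw [real_inner_self_eq_norm_sq, ht_def]
      field_simp
      ring
    have hxsq : ‖x‖ ^ 2 = (t + lam) ^ 2 := by
      rw [hx_def, norm_add_sq_real, inner_smul_right, hwy, norm_smul, ← real_inner_self_eq_norm_sq, hww]
      simp [hy]
      ring
    have htlam : 0 ≤ t + lam := by
      rw [ht_def]
      have : (‖w‖ ^ 2 - lam ^ 2) / (2 * lam) + lam = (‖w‖ ^ 2 + lam ^ 2) / (2 * lam) := by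
        field_simp; ring
      rw [this]; positivity
    have hxnorm : ‖x‖ = t + lam := by
      calc ‖x‖ = Real.sqrt (‖x‖ ^ 2) := (Real.sqrt_sq (norm_nonneg _)).symm
        _ = Real.sqrt ((t + lam) ^ 2) := by rw [hxsq]
        _ = t + lam := Real.sqrt_sq htlam
    have hwz : ⟪x, z⟫ = ⟪w, z⟫ + t * s := by
      simp [hx_def, inner_add_left, inner_smul_left, hs_def]
    -- squared ball inequality
    have hball2 : ‖w - (2 * lam / ‖y - z‖ ^ 2) • (z - s • y)‖ ^ 2 ≤
        (2 * Real.sqrt (lam * mu) / ‖y - z‖) ^ 2 :=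
      pow_le_pow_left₀ (norm_nonneg _) hball 2
    have cap : ‖x‖ ≤ ⟪x, z⟫ + mu := by
      rw [hxnorm, hwz]
      rw [hrsq, ← real_inner_self_eq_norm_sq, hyz2] at hball2
      simp only [inner_sub_left, inner_sub_right, inner_smul_left, inner_smul_right,
        RCLike.ofReal_real_eq_id, id_eq, conj_trivial] at hball2
      rw [← real_inner_comm y w, ← real_inner_comm z w, hzy, hyy, hzz, hwy, hww,
        ← hs_def] at hball2
      exact scalar_bwd lam mu s t ⟪w, z⟫ hlam hd hball2
    refine ⟨x, ⟨by rw [hxy]; exact hxnorm, cap⟩, ?_⟩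
    rw [proj_perp_eq y hy x, hxy, hx_def]
    abel
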